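/- Let X be a normal space in which every one-point subset is Gδ. Then the following are equivalent: (1) C(X) = B₁(X); (2) X is discrete; (3) B₁(X) is a ring of quotients of C(X). -/

import Mathlib

open Filter Topology

def IsBaireOne {X : Type*} [TopologicalSpace X] (f : X → ℝ) : Prop :=
  ∃ F : ℕ → X → ℝ, (∀ n, Continuous (F n)) ∧
    ∀ x, Filter.Tendsto (fun n => F n x) Filter.atTop (nhds (f x))

def B1 (X : Type*) [TopologicalSpace X] : Subring (X → ℝ) where
  carrier := {f | IsBaireOne f}
  zero_mem' := ⟨fun _ _ => 0, fun _ => continuous_const, fun _ => tendsto_const_nhds⟩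
  one_mem' := ⟨fun _ _ => 1, fun _ => continuous_const, fun _ => tendsto_const_nhds⟩
  add_mem' := by
    rintro f g ⟨F, hF, hFf⟩ ⟨G, hG, hGg⟩
    exact ⟨fun n => F n + G n, fun n => (hF n).add (hG n), fun x => (hFf x).add (hGg x)⟩
  mul_mem' := by
    rintro f g ⟨F, hF, hFf⟩ ⟨G, hG, hGg⟩
    exact ⟨fun n => F n * G n, fun n => (hF n).mul (hG n), fun x => (hFf x).mul (hGg x)⟩
  neg_mem' := by
    rintro f ⟨F, hF, hFf⟩
    exact ⟨fun n => -F n, fun n => (hF n).neg, fun x => (hFf x).neg⟩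

def zset {X : Type*} [TopologicalSpace X] (f : ↥(B1 X)) : Set X := {x | (f : X → ℝ) x = 0}

noncomputable def chi {X : Type*} (p : X) : X → ℝ := Set.indicator {p} (fun _ => 1)

def IsFsigma {X : Type*} [TopologicalSpace X] (s : Set X) : Prop :=
  ∃ c : ℕ → Set X, (∀ n, IsClosed (c n)) ∧ s = ⋃ n, c n


lemma chi_self {X : Type*} (p : X) : chi p p = 1 := by simp [chi]

lemma chi_ne {X : Type*} {p x : X} (h : x ≠ p) : chi p x = 0 := by simp [chi, h]

lemma chi_isBaireOne {X : Type*} [TopologicalSpace X] [T1Space X] [NormalSpace X]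
    (p : X) (hGp : IsGδ ({p} : Set X)) : IsBaireOne (chi p) := by
  obtain ⟨U, hUopen, hUeq⟩ := hGp.eq_iInter_nat
  have hpU : ∀ n, p ∈ U n := fun n => by
    have : p ∈ ⋂ n, U n := hUeq ▸ rfl
    exact Set.mem_iInter.1 this n
  have hf : ∀ n : ℕ, ∃ f : C(X, ℝ), Set.EqOn f 0 (U n)ᶜ ∧ Set.EqOn f 1 {p} := by
    intro n
    obtain ⟨f, h0, h1, _⟩ := exists_continuous_zero_one_of_isClosed
      (isClosed_compl_iff.2 (hUopen n)) isClosed_singleton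
      (Set.disjoint_left.2 fun x hx hxp => hx (hxp ▸ hpU n))
    exact ⟨f, h0, h1⟩
  choose f hf0 hf1 using hf
  refine ⟨fun N x => ∏ n ∈ Finset.range N, f n x, fun N => by continuity, fun x => ?_⟩
  by_cases hx : x = p
  · subst hx
    have h1 : ∀ N, ∏ n ∈ Finset.range N, f n x = 1 := fun N =>
      Finset.prod_eq_one fun n _ => hf1 n rfl
    have : chi x x = 1 := chi_self x
    simp only [h1, this]
    exact tendsto_const_nhds
  · have hxU : x ∉ ⋂ n, U n := by rw [← hUeq]; simpa using hx
    obtain ⟨n₀, hn₀⟩ : ∃ n, x ∉ U n := by simpa using hxU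
    have hzero : ∀ N, n₀ < N → ∏ n ∈ Finset.range N, f n x = 0 := fun N hN =>
      Finset.prod_eq_zero (Finset.mem_range.2 hN) (hf0 n₀ hn₀)
    have : chi p x = 0 := chi_ne hx
    rw [this]
    exact tendsto_atTop_of_eventually_const (i₀ := n₀ + 1) fun N hN => hzero N hN

lemma open_singleton_of_chi {X : Type*} [TopologicalSpace X] (p : X) (g : X → ℝ)
    (hg : Continuous g) (hgp : g p ≠ 0) (hgx : ∀ x, x ≠ p → g x = 0) :
    IsOpen ({p} : Set X) := by
  have : ({p} : Set X) = g ⁻¹' ({0}ᶜ) := by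
    ext x
    constructor
    · rintro rfl; exact hgp
    · intro hx
      by_contra hxp
      exact hx (hgx x hxp)
  rw [this]
  exact (isClosed_singleton.preimage hg).isOpen_compl

theorem stmt_12 {X : Type*} [TopologicalSpace X] [T1Space X] [NormalSpace X]
    (hG : ∀ p : X, IsGδ ({p} : Set X)) :
    [ (∀ f : X → ℝ, IsBaireOne f → Continuous f),
      DiscreteTopology X,
      (∀ f : X → ℝ, IsBaireOne f → f ≠ 0 →
        ∃ r : X → ℝ, Continuous r ∧ f * r ≠ 0 ∧ Continuous (f * r)) ].TFAE := by
  tfae_have 2 → 1 := by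
    intro h f _
    exact continuous_of_discreteTopology
  tfae_have 2 → 3 := by
    intro h f hf hf0
    exact ⟨1, continuous_const, by simpa using hf0, continuous_of_discreteTopology⟩
  tfae_have 1 → 2 := by
    intro h
    rw [discreteTopology_iff_isOpen_singleton]
    intro p
    have hc := h (chi p) (chi_isBaireOne p (hG p))
    refine open_singleton_of_chi p (chi p) hc ?_ ?_
    · rw [chi_self p]; norm_num
    · intro x hx; exact chi_ne hx
  tfae_have 3 → 2 := by
    intro h
    rw [discreteTopology_iff_isOpen_singleton]
    intro p
    have hne : chi p ≠ 0 := by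
      intro hz
      have := congrFun hz p
      rw [chi_self p] at this
      norm_num at this
    obtain ⟨r, hr, hne', hcont⟩ := h (chi p) (chi_isBaireOne p (hG p)) hne
    refine open_singleton_of_chi p (chi p * r) hcont ?_ ?_
    · intro hz
      apply hne'
      funext x
      by_cases hx : x = p
      · subst hx; exact hz
      · show chi p x * r x = 0
        rw [chi_ne hx, zero_mul]
    · intro x hx
      show chi p x * r x = 0
      rw [chi_ne hx, zero_mul]
  tfae_finish
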